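/- Let Π = Π(ρ, F) be the transition matrix of the network formation game on S = (E → Bool), and let π : S → ℝ be its stationary distribution (π g ≥ 0, ∑_g π g = 1, and ∑_g π g * Π g w = π w for all w). Then for every initial probability vector π₀ : S → ℝ (with π₀ g ≥ 0 and ∑_g π₀ g = 1) and every w ∈ S, the sequence t ↦ ∑_{g ∈ S} π₀ g * (Π^t) g w converges to π w as t → ∞; that is, the stationary distribution is the long-run distribution of the chain from any starting distribution. -/
import Mathlib


open Matrix Finset Filter

/-- Flip the link `e` in network `g`. -/
def flipL {E : Type*} [DecidableEq E] (e : E) (g : E → Bool) : E → Bool :=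
  Function.update g e (!(g e))

/-- The one-step transition matrix of the network formation game. -/
noncomputable def netPi {E : Type*} [DecidableEq E] [Fintype E]
    (ρ : E → (E → Bool) → ℝ) (F : (E → Bool) → E → ℝ) :
    Matrix (E → Bool) (E → Bool) ℝ :=
  Matrix.of fun g w =>
    if g = w then ∑ e, ρ e g * (1 - F g e)
    else ∑ e, if w = flipL e g then ρ e g * F g e else 0

/-- A meeting function: strictly positive selection probabilities summing to one. -/
def IsMeeting {E : Type*} [Fintype E] (ρ : E → (E → Bool) → ℝ) : Prop :=
  (∀ e g, 0 < ρ e g) ∧ ∀ g, ∑ e, ρ e g = 1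

/-- An acceptance function: probabilities strictly between 0 and 1, complementary under flips. -/
def IsAcceptance {E : Type*} [DecidableEq E] (F : (E → Bool) → E → ℝ) : Prop :=
  (∀ g e, 0 < F g e ∧ F g e < 1) ∧ ∀ g e, F g e + F (flipL e g) e = 1

section Aux
set_option linter.unusedSectionVars false

lemma contractionAux {S : Type*} [Fintype S] (Q : Matrix S S ℝ) (ε : ℝ)
    (hε : ∀ g w, ε ≤ Q g w) (h1 : ∀ g, ∑ w, Q g w = 1)
    (d : S → ℝ) (hd : ∑ g, d g = 0) :
    ∑ w, |∑ g, d g * Q g w| ≤ (1 - (Fintype.card S) * ε) * ∑ g, |d g| := by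
  have key : ∀ w, |∑ g, d g * Q g w| ≤ ∑ g, |d g| * (Q g w - ε) := by
    intro w
    have h2 : ∑ g, d g * Q g w = ∑ g, d g * (Q g w - ε) := by
      simp [mul_sub, Finset.sum_sub_distrib, ← Finset.sum_mul, hd]
    rw [h2]
    refine (Finset.abs_sum_le_sum_abs _ _).trans (Finset.sum_le_sum fun g _ => ?_)
    rw [abs_mul, abs_of_nonneg (sub_nonneg.2 (hε g w))]
  calc ∑ w, |∑ g, d g * Q g w| ≤ ∑ w, ∑ g, |d g| * (Q g w - ε) :=
        Finset.sum_le_sum fun w _ => key w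
    _ = ∑ g, |d g| * (1 - (Fintype.card S) * ε) := by
        rw [Finset.sum_comm]
        refine Finset.sum_congr rfl fun g _ => ?_
        rw [← Finset.mul_sum, Finset.sum_sub_distrib, h1, Finset.sum_const,
          Finset.card_univ, nsmul_eq_mul]
    _ = (1 - (Fintype.card S) * ε) * ∑ g, |d g| := by rw [← Finset.sum_mul]; ring

variable {E : Type*} [DecidableEq E] [Fintype E] [Nonempty E]
  {ρ : E → (E → Bool) → ℝ} {F : (E → Bool) → E → ℝ}

lemma flipL_ne (e : E) (g : E → Bool) : flipL e g ≠ g := by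
  intro h
  have := congrFun h e
  simp [flipL] at this

lemma netPi_nonneg (hρ : IsMeeting ρ) (hF : IsAcceptance F) (g w : E → Bool) :
    0 ≤ netPi ρ F g w := by
  unfold netPi
  simp only [Matrix.of_apply]
  split
  · exact Finset.sum_nonneg fun e _ =>
      mul_nonneg (hρ.1 e g).le (sub_nonneg.2 (hF.1 g e).2.le)
  · refine Finset.sum_nonneg fun e _ => ?_
    split
    · exact mul_nonneg (hρ.1 e g).le (hF.1 g e).1.le
    · exact le_refl 0

lemma netPi_rowsum (hρ : IsMeeting ρ) (g : E → Bool) :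
    ∑ w, netPi ρ F g w = 1 := by
  rw [← Finset.add_sum_erase Finset.univ _ (Finset.mem_univ g)]
  have h1 : netPi ρ F g g = ∑ e, ρ e g * (1 - F g e) := by simp [netPi]
  have h2 : ∑ w ∈ Finset.univ.erase g, netPi ρ F g w = ∑ e, ρ e g * F g e := by
    have : ∀ w ∈ Finset.univ.erase g, netPi ρ F g w =
        ∑ e, if w = flipL e g then ρ e g * F g e else 0 := by
      intro w hw
      have : g ≠ w := fun h => (Finset.mem_erase.1 hw).1 h.symm
      simp [netPi, this]
    rw [Finset.sum_congr rfl this, Finset.sum_comm]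
    refine Finset.sum_congr rfl fun e _ => ?_
    rw [Finset.sum_ite_eq' (Finset.univ.erase g) (flipL e g)]
    simp [flipL_ne e g]
  rw [h1, h2, ← Finset.sum_add_distrib]
  have : ∀ e, ρ e g * (1 - F g e) + ρ e g * F g e = ρ e g := fun e => by ring
  rw [Finset.sum_congr rfl fun e _ => this e, hρ.2 g]

lemma netPi_diag_pos (hρ : IsMeeting ρ) (hF : IsAcceptance F) (g : E → Bool) :
    0 < netPi ρ F g g := by
  have : netPi ρ F g g = ∑ e, ρ e g * (1 - F g e) := by simp [netPi]
  rw [this]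
  exact Finset.sum_pos (fun e _ => mul_pos (hρ.1 e g) (sub_pos.2 (hF.1 g e).2))
    Finset.univ_nonempty

lemma netPi_flip_pos (hρ : IsMeeting ρ) (hF : IsAcceptance F) (e : E) (g : E → Bool) :
    0 < netPi ρ F g (flipL e g) := by
  have hne : g ≠ flipL e g := fun h => flipL_ne e g h.symm
  have : netPi ρ F g (flipL e g) =
      ∑ e', if flipL e g = flipL e' g then ρ e' g * F g e' else 0 := by
    simp [netPi, hne]
  rw [this]
  refine Finset.sum_pos' (fun e' _ => ?_) ⟨e, Finset.mem_univ e, ?_⟩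
  · split
    · exact mul_pos (hρ.1 e' g) (hF.1 g e').1 |>.le
    · exact le_refl 0
  · simp [mul_pos (hρ.1 e g) (hF.1 g e).1]

lemma pow_nonneg' (hρ : IsMeeting ρ) (hF : IsAcceptance F) :
    ∀ t (g w : E → Bool), 0 ≤ (netPi ρ F ^ t) g w := by
  intro t
  induction t with
  | zero => intro g w; rw [pow_zero]; by_cases h : g = w <;> simp [Matrix.one_apply, h]
  | succ n ih =>
    intro g w
    rw [pow_succ, Matrix.mul_apply]
    exact Finset.sum_nonneg fun x _ => mul_nonneg (ih g x) (netPi_nonneg hρ hF x w)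

lemma pow_rowsum (hρ : IsMeeting ρ) :
    ∀ t (g : E → Bool), ∑ w, (netPi ρ F ^ t) g w = 1 := by
  intro t
  induction t with
  | zero => intro g; simp [Matrix.one_apply]
  | succ n ih =>
    intro g
    simp only [pow_succ, Matrix.mul_apply]
    rw [Finset.sum_comm]
    have : ∀ x, ∑ w, (netPi ρ F ^ n) g x * netPi ρ F x w = (netPi ρ F ^ n) g x := by
      intro x; rw [← Finset.mul_sum, netPi_rowsum hρ, mul_one]
    rw [Finset.sum_congr rfl fun x _ => this x, ih]

lemma pow_reach (hρ : IsMeeting ρ) (hF : IsAcceptance F) :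
    ∀ n (g w : E → Bool), (Finset.univ.filter fun e => g e ≠ w e).card ≤ n →
      0 < (netPi ρ F ^ n) g w := by
  intro n
  induction n with
  | zero =>
    intro g w h
    have hempty : (Finset.univ.filter fun e => g e ≠ w e) = ∅ :=
      Finset.card_eq_zero.1 (Nat.le_zero.1 h)
    have : g = w := by
      funext e
      by_contra he
      have : e ∈ Finset.univ.filter fun e => g e ≠ w e :=
        Finset.mem_filter.2 ⟨Finset.mem_univ e, he⟩
      rw [hempty] at this
      exact absurd this (Finset.notMem_empty e)
    subst this
    simp [Matrix.one_apply]
  | succ n ih =>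
    intro g w h
    rw [pow_succ', Matrix.mul_apply]
    by_cases hgw : g = w
    · subst hgw
      refine Finset.sum_pos' (fun x _ => mul_nonneg (netPi_nonneg hρ hF g x)
        (pow_nonneg' hρ hF n x g)) ⟨g, Finset.mem_univ g, ?_⟩
      refine mul_pos (netPi_diag_pos hρ hF g) (ih g g ?_)
      simp
    · obtain ⟨e, he⟩ : ∃ e, g e ≠ w e := by
        by_contra hc
        push_neg at hc
        exact hgw (funext hc)
      refine Finset.sum_pos' (fun x _ => mul_nonneg (netPi_nonneg hρ hF g x)
        (pow_nonneg' hρ hF n x w)) ⟨flipL e g, Finset.mem_univ _, ?_⟩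
      refine mul_pos (netPi_flip_pos hρ hF e g) (ih (flipL e g) w ?_)
      have hsub : (Finset.univ.filter fun e' => flipL e g e' ≠ w e') ⊆
          (Finset.univ.filter fun e' => g e' ≠ w e').erase e := by
        intro e' he'
        simp only [Finset.mem_filter, Finset.mem_univ, true_and] at he'
        by_cases hee : e' = e
        · subst hee
          exfalso
          apply he'
          simp only [flipL, Function.update_self]
          revert he; cases g e' <;> cases w e' <;> simp
        · refine Finset.mem_erase.2 ⟨hee, Finset.mem_filter.2 ⟨Finset.mem_univ _, ?_⟩⟩
          rwa [flipL, Function.update_of_ne hee] at he'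
      have hmem : e ∈ Finset.univ.filter fun e' => g e' ≠ w e' :=
        Finset.mem_filter.2 ⟨Finset.mem_univ e, he⟩
      calc (Finset.univ.filter fun e' => flipL e g e' ≠ w e').card
          ≤ ((Finset.univ.filter fun e' => g e' ≠ w e').erase e).card :=
            Finset.card_le_card hsub
        _ = (Finset.univ.filter fun e' => g e' ≠ w e').card - 1 :=
            Finset.card_erase_of_mem hmem
        _ ≤ n := by omega

end Aux

/-- The stationary distribution is the long-run distribution of the chain from any
starting distribution. -/
theorem tendsto_stationary {E : Type*} [DecidableEq E] [Fintype E] [Nonempty E]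
    (ρ : E → (E → Bool) → ℝ) (F : (E → Bool) → E → ℝ)
    (hρ : IsMeeting ρ) (hF : IsAcceptance F)
    (π : (E → Bool) → ℝ) (hπnonneg : ∀ g, 0 ≤ π g) (hπsum : ∑ g, π g = 1)
    (hπstat : ∀ w, ∑ g, π g * netPi ρ F g w = π w)
    (π₀ : (E → Bool) → ℝ) (hπ₀nonneg : ∀ g, 0 ≤ π₀ g) (hπ₀sum : ∑ g, π₀ g = 1) :
    ∀ w : E → Bool,
      Tendsto (fun t : ℕ => ∑ g, π₀ g * (netPi ρ F ^ t) g w) atTop (nhds (π w)) := by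
  set P := netPi ρ F with hPdef
  set N := Fintype.card E with hNdef
  have hNpos : 0 < N := Fintype.card_pos
  -- positivity of P^N
  have hN : ∀ g w : E → Bool, 0 < (P ^ N) g w := by
    intro g w
    refine pow_reach hρ hF N g w ?_
    calc (Finset.univ.filter fun e => g e ≠ w e).card ≤ Finset.univ.card :=
          Finset.card_filter_le _ _
      _ = N := Finset.card_univ
  -- Doeblin constant
  have huniv : (Finset.univ : Finset ((E → Bool) × (E → Bool))).Nonempty :=
    Finset.univ_nonempty
  set δ : ℝ := Finset.inf' Finset.univ huniv (fun p => (P ^ N) p.1 p.2) with hδdef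
  have hδpos : 0 < δ := (Finset.lt_inf'_iff huniv).2 fun p _ => hN p.1 p.2
  have hδle : ∀ g w : E → Bool, δ ≤ (P ^ N) g w := fun g w =>
    Finset.inf'_le _ (Finset.mem_univ (g, w))
  set c : ℝ := (Fintype.card (E → Bool) : ℝ) with hcdef
  have hcpos : 0 < c := by
    exact_mod_cast Nat.cast_pos.2 Fintype.card_pos
  set r : ℝ := 1 - c * δ with hrdef
  have hr1 : r < 1 := by
    have : 0 < c * δ := mul_pos hcpos hδpos
    simp [hrdef]; linarith
  have hr0 : 0 ≤ r := by
    obtain ⟨g₀⟩ := (inferInstance : Nonempty (E → Bool))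
    have h1 : c * δ = ∑ _w : E → Bool, δ := by
      rw [Finset.sum_const, Finset.card_univ, nsmul_eq_mul]
    have h2 : (∑ _w : E → Bool, δ) ≤ ∑ w, (P ^ N) g₀ w :=
      Finset.sum_le_sum fun w _ => hδle g₀ w
    have h3 : ∑ w, (P ^ N) g₀ w = 1 := pow_rowsum hρ N g₀
    simp only [hrdef, sub_nonneg]
    rw [h1]; rw [h3] at h2; exact h2
  -- the time-t distribution
  set μ : ℕ → (E → Bool) → ℝ := fun t x => ∑ g, π₀ g * (P ^ t) g x with hμdef
  have hμadd : ∀ t s (w : E → Bool), μ (t + s) w = ∑ x, μ t x * (P ^ s) x w := by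
    intro t s w
    simp only [hμdef, pow_add, Matrix.mul_apply, Finset.mul_sum]
    rw [Finset.sum_comm]
    refine Finset.sum_congr rfl fun x _ => ?_
    rw [Finset.sum_mul]
    exact Finset.sum_congr rfl fun g _ => by ring
  have hπpow : ∀ s (w : E → Bool), ∑ x, π x * (P ^ s) x w = π w := by
    intro s
    induction s with
    | zero => intro w; simp [Matrix.one_apply]
    | succ n ih =>
      intro w
      simp only [pow_succ, Matrix.mul_apply, Finset.mul_sum]
      rw [Finset.sum_comm]
      have : ∀ y, (∑ x, π x * ((P ^ n) x y * P y w)) = π y * P y w := by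
        intro y
        have : ∀ x, π x * ((P ^ n) x y * P y w) = (π x * (P ^ n) x y) * P y w :=
          fun x => by ring
        rw [Finset.sum_congr rfl fun x _ => this x, ← Finset.sum_mul, ih y]
      rw [Finset.sum_congr rfl fun y _ => this y, hπstat w]
  have hμsum : ∀ t, ∑ x, μ t x = 1 := by
    intro t
    simp only [hμdef]
    rw [Finset.sum_comm]
    have : ∀ g, (∑ x, π₀ g * (P ^ t) g x) = π₀ g := by
      intro g; rw [← Finset.mul_sum, pow_rowsum hρ, mul_one]
    rw [Finset.sum_congr rfl fun g _ => this g, hπ₀sum]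
  -- distance to stationarity
  set d : ℕ → ℝ := fun t => ∑ x, |μ t x - π x| with hddef
  have hd0 : ∀ t, 0 ≤ d t := fun t => Finset.sum_nonneg fun x _ => abs_nonneg _
  have hstep : ∀ t s (ε : ℝ), (∀ x y : E → Bool, ε ≤ (P ^ s) x y) →
      d (t + s) ≤ (1 - c * ε) * d t := by
    intro t s ε hεle
    have hdiff : ∀ w, μ (t + s) w - π w = ∑ x, (μ t x - π x) * (P ^ s) x w := by
      intro w
      rw [hμadd t s w, ← hπpow s w, ← Finset.sum_sub_distrib]
      exact Finset.sum_congr rfl fun x _ => by ring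
    have hzero : ∑ x, (μ t x - π x) = 0 := by
      rw [Finset.sum_sub_distrib, hμsum t, hπsum, sub_self]
    have := contractionAux (P ^ s) ε hεle (pow_rowsum hρ s) (fun x => μ t x - π x) hzero
    calc d (t + s) = ∑ w, |∑ x, (μ t x - π x) * (P ^ s) x w| :=
          Finset.sum_congr rfl fun w _ => by rw [hdiff w]
      _ ≤ (1 - c * ε) * ∑ x, |μ t x - π x| := this
      _ = (1 - c * ε) * d t := rfl
  have hmono : Antitone d := by
    refine antitone_nat_of_succ_le fun t => ?_
    have := hstep t 1 0 fun x y => by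
      simpa using pow_nonneg' hρ hF 1 x y
    simpa using this
  have hgeo : ∀ k, d (k * N) ≤ r ^ k * d 0 := by
    intro k
    induction k with
    | zero => simp
    | succ m ih =>
      have h1 : d ((m + 1) * N) ≤ r * d (m * N) := by
        have := hstep (m * N) N δ fun x y => hδle x y
        rwa [Nat.succ_mul]
      calc d ((m + 1) * N) ≤ r * d (m * N) := h1
        _ ≤ r * (r ^ m * d 0) := by
            exact mul_le_mul_of_nonneg_left ih hr0
        _ = r ^ (m + 1) * d 0 := by ring
  have hdle : ∀ t, d t ≤ r ^ (t / N) * d 0 := by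
    intro t
    calc d t ≤ d (t / N * N) := hmono (Nat.div_mul_le_self t N)
      _ ≤ r ^ (t / N) * d 0 := hgeo (t / N)
  have hdiv : Tendsto (fun t : ℕ => t / N) atTop atTop :=
    Filter.tendsto_atTop_atTop.2 fun b =>
      ⟨b * N, fun t ht => (Nat.le_div_iff_mul_le hNpos).2 ht⟩
  have hrpow : Tendsto (fun t : ℕ => r ^ (t / N) * d 0) atTop (nhds 0) := by
    have h1 : Tendsto (fun t : ℕ => r ^ (t / N)) atTop (nhds 0) :=
      (tendsto_pow_atTop_nhds_zero_of_lt_one hr0 hr1).comp hdiv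
    simpa using h1.mul_const (d 0)
  have hdtend : Tendsto d atTop (nhds 0) :=
    tendsto_of_tendsto_of_tendsto_of_le_of_le tendsto_const_nhds hrpow hd0 hdle
  -- conclude coordinatewise
  intro w
  have habs : ∀ t, |μ t w - π w| ≤ d t := fun t =>
    Finset.single_le_sum (f := fun x => |μ t x - π x|)
      (fun x _ => abs_nonneg _) (Finset.mem_univ w)
  have h1 : Tendsto (fun t => |μ t w - π w|) atTop (nhds 0) :=
    tendsto_of_tendsto_of_tendsto_of_le_of_le tendsto_const_nhds hdtend
      (fun t => abs_nonneg _) habs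
  have h2 : Tendsto (fun t => μ t w - π w) atTop (nhds 0) := by
    rw [tendsto_zero_iff_norm_tendsto_zero]
    simpa [Real.norm_eq_abs] using h1
  have h3 := h2.add (tendsto_const_nhds (x := π w))
  simpa using h3
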